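/- Suppose R : R → SO(3) satisfies Ṙ = R Ω̂ for a curve Ω : R → R^3, and R_d ∈ SO(3) is constant. Let A(t) = (1/2) tr(G(I − R_d^T R(t))) with G = diag(g1,g2,g3), g_i > 0. Then dA/dt = e_{R_A} · Ω, where e_{R_A} = (1/2)(G R_d^T R − R^T R_d G)^∨. -/

import Mathlib

open Matrix

noncomputable section

attribute [local instance] Matrix.frobeniusNormedAddCommGroup Matrix.frobeniusNormedSpace

/-- The hat map sending `x ∈ ℝ³` to the skew-symmetric matrix `x̂` with `x̂ y = x × y`. -/
def hat (x : Fin 3 → ℝ) : Matrix (Fin 3) (Fin 3) ℝ :=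
  !![0, -x 2, x 1; x 2, 0, -x 0; -x 1, x 0, 0]

/-- The vee map, inverse of the hat map on skew-symmetric matrices. -/
def vee (A : Matrix (Fin 3) (Fin 3) ℝ) : Fin 3 → ℝ :=
  ![A 2 1, A 0 2, A 1 0]

theorem deriv_A (g1 g2 g3 : ℝ) (hg1 : 0 < g1) (hg2 : 0 < g2) (hg3 : 0 < g3)
    (Rd : Matrix (Fin 3) (Fin 3) ℝ) (hRd : Rdᵀ * Rd = 1) (hRddet : Rd.det = 1)
    (R : ℝ → Matrix (Fin 3) (Fin 3) ℝ) (Ω : ℝ → Fin 3 → ℝ)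
    (hSO : ∀ t, (R t)ᵀ * R t = 1 ∧ (R t).det = 1)
    (hkin : ∀ t, HasDerivAt R (R t * hat (Ω t)) t) (t : ℝ) :
    HasDerivAt
      (fun s => (1 / 2) * trace (Matrix.diagonal ![g1, g2, g3] * (1 - Rdᵀ * R s)))
      (((1 / 2 : ℝ) • vee (Matrix.diagonal ![g1, g2, g3] * Rdᵀ * R t -
        (R t)ᵀ * Rd * Matrix.diagonal ![g1, g2, g3])) ⬝ᵥ Ω t) t := by
  set G := Matrix.diagonal ![g1, g2, g3] with hG
  have f : Matrix (Fin 3) (Fin 3) ℝ →L[ℝ] ℝ :=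
    LinearMap.toContinuousLinearMap
      ((Matrix.traceLinearMap (Fin 3) ℝ ℝ).comp (LinearMap.mulLeft ℝ (G * Rdᵀ)))
  have key : HasDerivAt (fun s => trace (G * Rdᵀ * R s))
      (trace (G * Rdᵀ * (R t * hat (Ω t)))) t := by
    have := (LinearMap.toContinuousLinearMap
      ((Matrix.traceLinearMap (Fin 3) ℝ ℝ).comp
        (LinearMap.mulLeft ℝ (G * Rdᵀ)))).hasFDerivAt.comp_hasDerivAt t (hkin t)
    have e : (LinearMap.toContinuousLinearMap
      ((Matrix.traceLinearMap (Fin 3) ℝ ℝ).comp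
        (LinearMap.mulLeft ℝ (G * Rdᵀ)))) (R t * hat (Ω t)) = trace (G * Rdᵀ * (R t * hat (Ω t))) := rfl
    have h2 := this.congr_deriv e
    exact h2
  have key2 : HasDerivAt (fun s => (1 / 2 : ℝ) * trace (G * (1 - Rdᵀ * R s)))
      ((1 / 2 : ℝ) * (0 - trace (G * Rdᵀ * (R t * hat (Ω t))))) t := by
    have : (fun s => (1 / 2 : ℝ) * trace (G * (1 - Rdᵀ * R s)))
        = fun s => (1 / 2 : ℝ) * (trace G - trace (G * Rdᵀ * R s)) := by
      funext s
      rw [Matrix.mul_sub, Matrix.mul_one, Matrix.trace_sub, Matrix.mul_assoc]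
    rw [this]
    exact ((hasDerivAt_const t (trace G)).sub key).const_mul _
  convert key2 using 1
  simp only [Matrix.trace, Matrix.diag, Matrix.mul_apply, Fin.sum_univ_three, hat, vee,
    dotProduct, Pi.smul_apply, smul_eq_mul, Matrix.sub_apply, Matrix.transpose_apply,
    Matrix.cons_val', Matrix.cons_val_zero, Matrix.cons_val_one, Matrix.head_cons,
    Matrix.empty_val', Matrix.cons_val_fin_one, Matrix.head_fin_const,
    Matrix.of_apply, Matrix.cons_val_two, Matrix.tail_cons, hG, Matrix.diagonal_apply,
    Fin.sum_univ_succ]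
  norm_num [Fin.ext_iff]
  rw [show ((2 : Fin 3)) = Fin.succ (Fin.succ 0) from rfl] at *
  simp
  ring
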